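/- Let (a_k) be a sequence of reals tending to infinity and (m_k) an increasing sequence of positive integers with m_k ≥ k^{a_k} for each k, and let I be an ideal on ℕ with M = {m_k : k ∈ ℕ} ∉ I. Then AOS(I) ∪ {0}, where AOS(I) = {(a_n) ∈ ℓ₁ : (n·a_n) does not I-converge to 0}, contains a free subalgebra of ℓ₁ (with coordinatewise multiplication) generated by continuum many free generators; i.e., AOS(I) is strongly 𝔠-algebrable. -/

import Mathlib

open Filter Set Cardinal MvPolynomial Topology

lemma AOS_aux_aeval_pi {σ : Type*} (v : σ → ℕ → ℝ) (p : MvPolynomial σ ℝ) (n : ℕ) :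
    MvPolynomial.aeval v p n = MvPolynomial.eval (fun c => v c n) p := by
  have h := MvPolynomial.comp_aeval_apply (f := v) (Pi.evalAlgHom ℝ (fun _ : ℕ => ℝ) n) p
  simp only [Pi.evalAlgHom_apply] at h
  rw [h, MvPolynomial.aeval_def, MvPolynomial.eval]; rfl

lemma AOS_aux_eval_rpow {G : Type*} (E : G → ℝ) (p : MvPolynomial G ℝ) (b : ℝ) (hb : 0 < b) :
    MvPolynomial.eval (fun c => b ^ (-(E c))) p
      = ∑ d ∈ p.support, MvPolynomial.coeff d p * b ^ (-(d.sum fun c n => (n : ℝ) * E c)) := by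
  rw [MvPolynomial.eval_eq]
  refine Finset.sum_congr rfl fun d _ => ?_
  congr 1
  have h : ∀ c ∈ d.support, (b ^ (-(E c))) ^ (d c) = b ^ (-(E c) * (d c : ℝ)) := by
    intro c _
    rw [← Real.rpow_natCast (b ^ (-(E c))) (d c), ← Real.rpow_mul hb.le]
  rw [Finset.prod_congr rfl h, ← Real.rpow_sum_of_pos hb]
  congr 1
  rw [Finsupp.sum, ← Finset.sum_neg_distrib]
  exact Finset.sum_congr rfl fun c _ => by ring

lemma AOS_stepA : ∃ (ι : Type) (f : ι → ℝ), #ι = 𝔠 ∧ LinearIndependent ℚ f ∧ ∀ i, 1 < f i := by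
  classical
  obtain ⟨s, ⟨b⟩⟩ := Module.Basis.exists_basis ℚ ℝ
  have hcard : #s = 𝔠 := by rw [b.mk_eq_rank'', Real.rank_rat_real]
  have hne : ∀ i : s, (b i) ≠ 0 := fun i => b.ne_zero i
  have hq : ∀ i : s, ∃ q : ℚ, q ≠ 0 ∧ 1 < (q : ℝ) * b i := by
    intro i
    rcases lt_or_gt_of_ne (hne i) with h | h
    · obtain ⟨q, hq⟩ := exists_rat_lt (1 / b i)
      refine ⟨q, ?_, (lt_div_iff_of_neg h).mp hq⟩
      rintro rfl
      exact absurd hq (by push_cast; exact not_lt.mpr (one_div_neg.mpr h).le)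
    · obtain ⟨q, hq⟩ := exists_rat_gt (1 / b i)
      refine ⟨q, ?_, (div_lt_iff₀ h).mp hq⟩
      rintro rfl
      exact absurd hq (by push_cast; exact not_lt.mpr (one_div_pos.mpr h).le)
  choose q hq0 hq1 using hq
  let w : s → ℚˣ := fun i => Units.mk0 (q i) (hq0 i)
  have hli : LinearIndependent ℚ (w • (b : s → ℝ)) := b.linearIndependent.units_smul w
  exact ⟨s, _, hcard, hli, fun i => by simpa [w, Units.smul_def, Rat.smul_def] using hq1 i⟩

/-- Strong `𝔠`-algebrability of `AOS(I)`: if `(e k)` tends to infinity, `(m k)` is an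
increasing sequence of positive integers with `m k ≥ k ^ (e k)`, and
`M = {m k : k ∈ ℕ} ∉ I`, then `AOS(I) ∪ {0}` (inside `ℓ₁` with coordinatewise
multiplication) contains a free subalgebra with continuum many free generators:
there is a set `G` of cardinality `𝔠` of sequences such that every polynomial without
constant term, nonzero, evaluated at the generators yields an element of `ℓ₁` whose
sequence `(n * a n)` is not `I`-convergent to `0` (in particular the evaluation is
injective on such polynomials, so the generated algebra is free). -/
theorem AOS_strongly_algebrable (I : Set (Set ℕ))
    (hfin : ∀ A : Set ℕ, A.Finite → A ∈ I)
    (hsub : ∀ A B : Set ℕ, A ⊆ B → B ∈ I → A ∈ I)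
    (hunion : ∀ A B : Set ℕ, A ∈ I → B ∈ I → A ∪ B ∈ I)
    (huniv : (Set.univ : Set ℕ) ∉ I)
    (e : ℕ → ℝ) (he : Tendsto e atTop atTop)
    (m : ℕ → ℕ) (hmpos : ∀ k, 0 < m k) (hmmono : StrictMono m)
    (hmge : ∀ k : ℕ, (k : ℝ) ^ (e k) ≤ (m k : ℝ))
    (hM : Set.range m ∉ I) :
    ∃ G : Set (ℕ → ℝ), Cardinal.mk G = Cardinal.continuum ∧
      ∀ p : MvPolynomial G ℝ,
        MvPolynomial.coeff 0 p = 0 → p ≠ 0 →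
        (Summable fun n => |MvPolynomial.aeval (Subtype.val : G → ℕ → ℝ) p n|) ∧
        ¬ ∀ ε > (0 : ℝ),
          {n : ℕ | ε ≤ |(n : ℝ) * MvPolynomial.aeval (Subtype.val : G → ℕ → ℝ) p n|} ∈ I := by
  classical
  obtain ⟨ι, f, hcard, hli, hf1⟩ := AOS_stepA
  have finj : Function.Injective f := hli.injective
  -- the generators
  set g : ι → ℕ → ℝ := fun i n =>
    if h : ∃ k, m (k + 1) = n then ((Nat.find h + 2 : ℕ) : ℝ) ^ (-(f i)) else 0 with hgdef
  have hgm : ∀ i k, g i (m (k + 1)) = ((k + 2 : ℕ) : ℝ) ^ (-(f i)) := by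
    intro i k
    have hex : ∃ j, m (j + 1) = m (k + 1) := ⟨k, rfl⟩
    have hfk : Nat.find hex = k := by
      have h1 := Nat.find_spec hex
      have h2 := hmmono.injective h1
      omega
    simp only [hgdef, dif_pos hex, hfk]
  have hgnot : ∀ i n, (¬ ∃ k, m (k + 1) = n) → g i n = 0 := by
    intro i n h; simp only [hgdef, dif_neg h]
  have h2inj : ∀ a b : ℝ, (2 : ℝ) ^ a = (2 : ℝ) ^ b → a = b := fun a b h =>
    le_antisymm ((Real.rpow_le_rpow_left_iff one_lt_two).mp h.le)
      ((Real.rpow_le_rpow_left_iff one_lt_two).mp h.ge)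
  have ginj : Function.Injective g := by
    intro i i' h
    have h0 := congrFun h (m (0 + 1))
    rw [hgm, hgm] at h0
    norm_num at h0
    exact finj (neg_injective (h2inj _ _ h0))
  refine ⟨Set.range g, ?_, ?_⟩
  · rw [Cardinal.mk_range_eq _ ginj, hcard]
  set G : Set (ℕ → ℝ) := Set.range g
  have hexg : ∀ c : G, ∃ i, g i = (c : ℕ → ℝ) := fun c => c.2
  choose ex hgex using hexg
  have exinj : Function.Injective ex := fun c c' h =>
    Subtype.ext (by rw [← hgex c, ← hgex c', h])
  set E : G → ℝ := fun c => f (ex c) with hEdef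
  have hE1 : ∀ c, 1 < E c := fun c => hf1 _
  set S : (G →₀ ℕ) → ℝ := fun d => d.sum fun c n => (n : ℝ) * E c with hSdef
  -- injectivity of exponents
  have Sinj : Function.Injective S := by
    intro d d' h
    simp only [hSdef, hEdef] at h
    set emb : G ↪ ι := ⟨ex, exinj⟩
    set D := Finsupp.embDomain emb d with hD
    set D' := Finsupp.embDomain emb d' with hD'
    have hs : ∀ dd : G →₀ ℕ, (Finsupp.embDomain emb dd).sum (fun i n => (n : ℝ) * f i)
        = dd.sum fun c n => (n : ℝ) * f (ex c) := fun dd => Finsupp.sum_embDomain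
    set l : ι →₀ ℚ := D.mapRange (fun n : ℕ => (n : ℚ)) (by simp)
      - D'.mapRange (fun n : ℕ => (n : ℚ)) (by simp) with hl
    have hcomb : ∀ DD : ι →₀ ℕ, Finsupp.linearCombination ℚ f
        (DD.mapRange (fun n : ℕ => (n : ℚ)) (by simp)) = DD.sum fun i n => (n : ℝ) * f i := by
      intro DD
      rw [Finsupp.linearCombination_apply, Finsupp.sum_mapRange_index (by simp)]
      refine Finsupp.sum_congr fun i _ => ?_
      rw [Rat.smul_def]; push_cast; ring
    have hl0 : Finsupp.linearCombination ℚ f l = 0 := by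
      rw [hl, map_sub, hcomb, hcomb, hs, hs, h, sub_self]
    have hl00 : l = 0 := linearIndependent_iff.mp hli l hl0
    have hDD : D = D' := by
      ext i
      have h3 := congrArg (fun x : ι →₀ ℚ => x i) hl00
      simp only [Finsupp.sub_apply, Finsupp.mapRange_apply, Finsupp.coe_zero, Pi.zero_apply,
        hl] at h3
      have h2 : ((D i : ℚ)) = (D' i : ℚ) := sub_eq_zero.mp h3
      exact_mod_cast h2
    exact Finsupp.embDomain_injective emb (hD ▸ hD' ▸ hDD)
  intro p hp0 hpne
  set a : ℕ → ℝ := fun n => MvPolynomial.aeval (Subtype.val : G → ℕ → ℝ) p n with hadef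
  -- formula for the value at m (k+1)
  have hk2pos : ∀ k : ℕ, (0 : ℝ) < ((k + 2 : ℕ) : ℝ) := by
    intro k; positivity
  have hval : ∀ k : ℕ, a (m (k + 1)) =
      ∑ d ∈ p.support, MvPolynomial.coeff d p * ((k + 2 : ℕ) : ℝ) ^ (-(S d)) := by
    intro k
    rw [hadef]
    simp only
    rw [AOS_aux_aeval_pi]
    have hpt : (fun c : G => (c : ℕ → ℝ) (m (k + 1)))
        = fun c : G => ((k + 2 : ℕ) : ℝ) ^ (-(E c)) := by
      funext c
      rw [← hgex c, hgm]
    rw [hpt, AOS_aux_eval_rpow E p _ (hk2pos k)]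
  -- the value vanishes off the m (k+1)
  have hzero : ∀ n, (¬ ∃ k, m (k + 1) = n) → a n = 0 := by
    intro n hn
    rw [hadef]
    simp only
    rw [AOS_aux_aeval_pi]
    have hpt : (fun c : G => (c : ℕ → ℝ) n) = fun _ : G => (0 : ℝ) := by
      funext c
      rw [← hgex c, hgnot _ _ hn]
    rw [hpt, MvPolynomial.eval_zero', MvPolynomial.constantCoeff_eq]
    exact hp0
  have hs0 : (0 : G →₀ ℕ) ∉ p.support := fun h => (MvPolynomial.mem_support_iff.mp h) hp0
  have hsne : p.support.Nonempty := by
    rw [Finset.nonempty_iff_ne_empty, Ne, MvPolynomial.support_eq_empty]; exact hpne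
  have hS1 : ∀ d ∈ p.support, 1 < S d := by
    intro d hd
    have hdne : d ≠ 0 := fun h => hs0 (h ▸ hd)
    obtain ⟨c0, hc0⟩ := Finsupp.support_nonempty_iff.mpr hdne
    have h1 : (1 : ℝ) ≤ (d c0 : ℝ) := by
      have := Finsupp.mem_support_iff.mp hc0
      exact_mod_cast Nat.one_le_iff_ne_zero.mpr this
    calc (1 : ℝ) < E c0 := hE1 c0
      _ ≤ (d c0 : ℝ) * E c0 := le_mul_of_one_le_left (zero_lt_one.trans (hE1 c0)).le h1
      _ ≤ S d := by
          rw [hSdef]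
          simp only
          rw [Finsupp.sum]
          exact Finset.single_le_sum (f := fun c => (d c : ℝ) * E c)
            (fun c _ => mul_nonneg (Nat.cast_nonneg _) (zero_lt_one.trans (hE1 c)).le) hc0
  have M'inj : Function.Injective (fun k : ℕ => m (k + 1)) := by
    intro k k' h
    have := hmmono.injective h
    omega
  constructor
  · -- summability
    have hvanish : ∀ n ∉ Set.range (fun k : ℕ => m (k + 1)), |a n| = 0 := by
      intro n hn
      rw [hzero n (by simpa [Set.mem_range] using hn), abs_zero]
    rw [show (fun n => |MvPolynomial.aeval (Subtype.val : G → ℕ → ℝ) p n|) = fun n => |a n| from rfl]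
    rw [← Function.Injective.summable_iff M'inj hvanish]
    have hbound : ∀ k : ℕ, ((fun n => |a n|) ∘ fun k : ℕ => m (k + 1)) k
        ≤ ∑ d ∈ p.support, |MvPolynomial.coeff d p| * ((k + 2 : ℕ) : ℝ) ^ (-(S d)) := by
      intro k
      simp only [Function.comp_apply]
      rw [hval k]
      refine (Finset.abs_sum_le_sum_abs _ _).trans ?_
      refine Finset.sum_le_sum fun d hd => ?_
      rw [abs_mul, abs_of_pos (Real.rpow_pos_of_pos (hk2pos k) _)]
    refine Summable.of_nonneg_of_le (fun k => abs_nonneg _) hbound ?_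
    refine summable_sum fun d hd => ?_
    refine Summable.mul_left _ ?_
    have h := Real.summable_nat_rpow (p := -(S d)) |>.mpr (by linarith [hS1 d hd])
    exact (summable_nat_add_iff 2).mpr h
  · -- non-I-convergence
    obtain ⟨d0, hd0, hmin⟩ := p.support.exists_min_image S hsne
    set b0 := MvPolynomial.coeff d0 p with hb0def
    have hb0 : b0 ≠ 0 := MvPolynomial.mem_support_iff.mp hd0
    set s0 := S d0 with hs0def
    have hs0gt1 : 1 < s0 := hS1 d0 hd0
    have hk2tend : Tendsto (fun k : ℕ => ((k + 2 : ℕ) : ℝ)) atTop atTop :=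
      tendsto_natCast_atTop_atTop.comp (tendsto_add_atTop_nat 2)
    -- Limit 1 : (k+2)^s0 * a (m (k+1)) → b0
    have hlim1 : Tendsto (fun k : ℕ => ((k + 2 : ℕ) : ℝ) ^ s0 * a (m (k + 1))) atTop (𝓝 b0) := by
      have heq : ∀ k : ℕ, ((k + 2 : ℕ) : ℝ) ^ s0 * a (m (k + 1))
          = ∑ d ∈ p.support, MvPolynomial.coeff d p * ((k + 2 : ℕ) : ℝ) ^ (s0 - S d) := by
        intro k
        rw [hval k, Finset.mul_sum]
        refine Finset.sum_congr rfl fun d _ => ?_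
        rw [show s0 - S d = s0 + -(S d) by ring, Real.rpow_add (hk2pos k)]
        ring
      simp only [heq]
      have hterm : ∀ d ∈ p.support, Tendsto
          (fun k : ℕ => MvPolynomial.coeff d p * ((k + 2 : ℕ) : ℝ) ^ (s0 - S d)) atTop
          (𝓝 (if d = d0 then b0 else 0)) := by
        intro d hd
        by_cases hdd : d = d0
        · subst hdd
          rw [if_pos rfl]
          refine tendsto_const_nhds.congr fun k => ?_
          rw [hb0def, hs0def, sub_self, Real.rpow_zero, mul_one]
        · simp only [if_neg hdd]
          have hlt : s0 < S d := lt_of_le_of_ne (hmin d hd) (fun h => hdd (Sinj h.symm))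
          have h0 : Tendsto (fun k : ℕ => ((k + 2 : ℕ) : ℝ) ^ (s0 - S d)) atTop (𝓝 0) := by
            have := (tendsto_rpow_neg_atTop (y := S d - s0) (by linarith)).comp hk2tend
            simpa [Function.comp_def, neg_sub] using this
          simpa using h0.const_mul (MvPolynomial.coeff d p)
      have := tendsto_finset_sum p.support hterm
      rwa [Finset.sum_ite_eq' p.support d0 (fun _ => b0), if_pos hd0] at this
    -- Limit 2 : m (k+1) * (k+2)^(-s0) → ∞
    have hlim2 : Tendsto (fun k : ℕ => (m (k + 1) : ℝ) * ((k + 2 : ℕ) : ℝ) ^ (-s0))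
        atTop atTop := by
      have hlow : Tendsto (fun k : ℕ => (2 : ℝ) ^ (e (k + 1) - 2 * s0)) atTop atTop := by
        have h1 : Tendsto (fun k : ℕ => e (k + 1) - 2 * s0) atTop atTop := by
          simpa [sub_eq_add_neg] using
            tendsto_atTop_add_const_right atTop (-(2 * s0)) (he.comp (tendsto_add_atTop_nat 1))
        have h2 : Tendsto (fun k : ℕ => Real.log 2 * (e (k + 1) - 2 * s0)) atTop atTop :=
          Tendsto.const_mul_atTop (Real.log_pos one_lt_two) h1
        refine (Real.tendsto_exp_atTop.comp h2).congr fun k => ?_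
        rw [Real.rpow_def_of_pos two_pos]; rfl
      refine tendsto_atTop_mono' atTop ?_ hlow
      have hev : ∀ᶠ k : ℕ in atTop, s0 ≤ e (k + 1) := by
        have := (he.comp (tendsto_add_atTop_nat 1)).eventually_ge_atTop s0
        exact this
      filter_upwards [hev, eventually_ge_atTop 1] with k hk hk1
      have hb : (0 : ℝ) < ((k + 1 : ℕ) : ℝ) := by positivity
      have hb2 : (2 : ℝ) ≤ ((k + 1 : ℕ) : ℝ) := by
        push_cast; exact_mod_cast by push_cast; linarith [Nat.one_le_iff_ne_zero.mpr (by omega : k ≠ 0)]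
      have hm1 : ((k + 1 : ℕ) : ℝ) ^ (e (k + 1)) ≤ (m (k + 1) : ℝ) := hmge (k + 1)
      have ht2b : ((k + 2 : ℕ) : ℝ) ≤ 2 * ((k + 1 : ℕ) : ℝ) := by push_cast; linarith
      have h1 : (2 * ((k + 1 : ℕ) : ℝ)) ^ (-s0) ≤ ((k + 2 : ℕ) : ℝ) ^ (-s0) :=
        Real.rpow_le_rpow_of_nonpos (hk2pos k) ht2b (by linarith)
      have h2 : (2 * ((k + 1 : ℕ) : ℝ)) ^ (-s0)
          = (2 : ℝ) ^ (-s0) * ((k + 1 : ℕ) : ℝ) ^ (-s0) :=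
        Real.mul_rpow (by norm_num) hb.le
      have h3 : (2 : ℝ) ^ (e (k + 1) - 2 * s0)
          = (2 : ℝ) ^ (-s0) * (2 : ℝ) ^ (e (k + 1) - s0) := by
        rw [← Real.rpow_add two_pos]; ring_nf
      have h4 : (2 : ℝ) ^ (e (k + 1) - s0) ≤ ((k + 1 : ℕ) : ℝ) ^ (e (k + 1) - s0) :=
        Real.rpow_le_rpow (by norm_num) hb2 (by linarith)
      have h5 : ((k + 1 : ℕ) : ℝ) ^ (e (k + 1) - s0)
          = ((k + 1 : ℕ) : ℝ) ^ (e (k + 1)) * ((k + 1 : ℕ) : ℝ) ^ (-s0) := by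
        rw [← Real.rpow_add hb]; ring_nf
      have hpos1 : (0 : ℝ) < (2 : ℝ) ^ (-s0) := Real.rpow_pos_of_pos two_pos _
      have hpos2 : (0 : ℝ) < ((k + 1 : ℕ) : ℝ) ^ (-s0) := Real.rpow_pos_of_pos hb _
      calc (2 : ℝ) ^ (e (k + 1) - 2 * s0)
          = (2 : ℝ) ^ (-s0) * (2 : ℝ) ^ (e (k + 1) - s0) := h3
        _ ≤ (2 : ℝ) ^ (-s0) * ((k + 1 : ℕ) : ℝ) ^ (e (k + 1) - s0) := by
            exact mul_le_mul_of_nonneg_left h4 hpos1.le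
        _ = ((k + 1 : ℕ) : ℝ) ^ (e (k + 1)) * ((2 : ℝ) ^ (-s0) * ((k + 1 : ℕ) : ℝ) ^ (-s0)) := by
            rw [h5]; ring
        _ ≤ (m (k + 1) : ℝ) * ((2 : ℝ) ^ (-s0) * ((k + 1 : ℕ) : ℝ) ^ (-s0)) := by
            exact mul_le_mul_of_nonneg_right hm1 (by positivity)
        _ = (m (k + 1) : ℝ) * (2 * ((k + 1 : ℕ) : ℝ)) ^ (-s0) := by rw [h2]
        _ ≤ (m (k + 1) : ℝ) * ((k + 2 : ℕ) : ℝ) ^ (-s0) := by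
            exact mul_le_mul_of_nonneg_left h1 (Nat.cast_nonneg _)
    -- combine
    have hcomb : Tendsto (fun k : ℕ => (m (k + 1) : ℝ) * |a (m (k + 1))|) atTop atTop := by
      have habs : Tendsto (fun k : ℕ => ((k + 2 : ℕ) : ℝ) ^ s0 * |a (m (k + 1))|) atTop
          (𝓝 |b0|) := by
        have := hlim1.abs
        refine this.congr fun k => ?_
        rw [abs_mul, abs_of_pos (Real.rpow_pos_of_pos (hk2pos k) _)]
      have := (Filter.Tendsto.atTop_mul_pos (abs_pos.mpr hb0) hlim2 habs)
      refine this.congr fun k => ?_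
      have hcancel : ((k + 2 : ℕ) : ℝ) ^ (-s0) * ((k + 2 : ℕ) : ℝ) ^ s0 = 1 := by
        rw [← Real.rpow_add (hk2pos k)]; simp
      calc (m (k + 1) : ℝ) * ((k + 2 : ℕ) : ℝ) ^ (-s0)
            * (((k + 2 : ℕ) : ℝ) ^ s0 * |a (m (k + 1))|)
          = (m (k + 1) : ℝ) * |a (m (k + 1))|
            * (((k + 2 : ℕ) : ℝ) ^ (-s0) * ((k + 2 : ℕ) : ℝ) ^ s0) := by ring
        _ = (m (k + 1) : ℝ) * |a (m (k + 1))| := by rw [hcancel, mul_one]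
    obtain ⟨K, hK⟩ := (hcomb.eventually_ge_atTop 1).exists_forall_of_atTop
    intro hconv
    have hA : {n : ℕ | (1 : ℝ) ≤ |(n : ℝ) * a n|} ∈ I := hconv 1 one_pos
    have hsubset : Set.range m ⊆ {n : ℕ | (1 : ℝ) ≤ |(n : ℝ) * a n|} ∪ (m '' Set.Iic K) := by
      rintro _ ⟨j, rfl⟩
      by_cases hj : j ≤ K
      · exact Or.inr ⟨j, hj, rfl⟩
      · left
        have hjK : K ≤ j - 1 := by omega
        have hj1 : j = (j - 1) + 1 := by omega
        have := hK (j - 1) hjK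
        rw [Set.mem_setOf_eq, hj1, abs_mul, Nat.abs_cast]
        exact this
    have hfinimg : (m '' Set.Iic K).Finite := (Set.finite_Iic K).image m
    exact hM (hsub _ _ hsubset (hunion _ _ hA (hfin _ hfinimg)))
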